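/- Let σ ≥ 0, let μ be the Gaussian probability measure on ℝ with mean 0 and variance σ², and let ν be any probability measure on ℝ with finite first moment and mean zero (∫_ℝ r dν(r) = 0). Then for all ρ, φ ∈ ℝ, the function (r, u) ↦ (ρ + r)·exp(i(φ + u)) is integrable with respect to the product measure ν × μ on ℝ × ℝ and ∫_{ℝ×ℝ} (ρ + r)·exp(i(φ + u)) d(ν × μ)(r, u) = e^{−σ²/2}·ρ·e^{iφ}. Equivalently, with λ = e^{−σ²/2}, the debiased spherical-to-Cartesian conversion is unbiased: E[λ⁻¹(ρ + r)·cos(φ + u)] = ρ·cos φ and E[λ⁻¹(ρ + r)·sin(φ + u)] = ρ·sin φ, where r has zero-mean law ν and u has law μ independently. -/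

import Mathlib

open MeasureTheory ProbabilityTheory
open scoped NNReal ENNReal

lemma gauss_cexp_I_integrable (m : Measure ℝ) [IsProbabilityMeasure m] (c : ℝ) :
    Integrable (fun u : ℝ => Complex.exp (Complex.I * ((c + u : ℝ) : ℂ))) m := by
  refine Integrable.mono' (integrable_const (1 : ℝ))
    ((Complex.measurable_exp.comp
      (measurable_const.mul (Complex.measurable_ofReal.comp (measurable_const_add c)))).aestronglyMeasurable)
    (Filter.Eventually.of_forall fun u => ?_)
  simp [Complex.norm_exp]

lemma gauss_cexp_I_integral (v : ℝ≥0) :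
    ∫ u : ℝ, Complex.exp (Complex.I * (u : ℂ)) ∂(gaussianReal 0 v)
      = ((Real.exp (-(v : ℝ) / 2) : ℝ) : ℂ) := by
  rcases eq_or_ne v 0 with hv | hv
  · subst hv
    simp [integral_dirac]
  · have hV : 0 < (v : ℝ) := NNReal.coe_pos.mpr (zero_lt_iff.mpr hv)
    set b : ℂ := ((-(1 / (2 * (v : ℝ))) : ℝ) : ℂ) with hb_def
    have hb : b.re < 0 := by
      rw [hb_def, Complex.ofReal_re]
      have : 0 < 1 / (2 * (v : ℝ)) := by positivity
      linarith
    have hmeas : Measurable fun x => Real.toNNReal (gaussianPDFReal 0 v x) :=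
      (measurable_gaussianPDFReal 0 v).real_toNNReal
    rw [gaussianReal_of_var_ne_zero _ hv]
    have hpdf : gaussianPDF 0 v
        = fun x => ((Real.toNNReal (gaussianPDFReal 0 v x) : ℝ≥0) : ℝ≥0∞) := rfl
    rw [hpdf, integral_withDensity_eq_integral_smul hmeas]
    have hsq : (0:ℝ) < 2 * Real.pi * (v : ℝ) := by positivity
    have hkey : ∀ x : ℝ, (Real.toNNReal (gaussianPDFReal 0 v x)) •
        Complex.exp (Complex.I * (x : ℂ))
        = ((Real.sqrt (2 * Real.pi * (v : ℝ)))⁻¹ : ℝ) •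
            Complex.exp (b * (x : ℂ) ^ 2 + Complex.I * (x : ℂ) + 0) := by
      intro x
      rw [NNReal.smul_def, Real.coe_toNNReal _ (gaussianPDFReal_nonneg 0 v x)]
      rw [gaussianPDFReal]
      simp only [Complex.real_smul, Complex.ofReal_mul, Complex.ofReal_inv, Complex.ofReal_exp]
      rw [mul_assoc, ← Complex.exp_add]
      congr 2
      push_cast [hb_def]
      have hv2 : (2 * ((v:ℝ):ℂ)) ≠ 0 := by
        have : ((v:ℝ):ℂ) ≠ 0 := by
          simp only [ne_eq, Complex.ofReal_eq_zero]
          positivity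
        simp [this]
      field_simp
      ring
    simp_rw [hkey]
    rw [integral_smul, integral_cexp_quadratic hb Complex.I 0]
    have h1 : ((Real.pi : ℂ) / -b) = ((2 * Real.pi * (v : ℝ) : ℝ) : ℂ) := by
      rw [hb_def]
      have h2v : ((v:ℝ):ℂ) ≠ 0 := by
        simp only [ne_eq, Complex.ofReal_eq_zero]
        positivity
      push_cast
      field_simp
    have h2 : ((2 * Real.pi * (v : ℝ) : ℝ) : ℂ) ^ (1 / 2 : ℂ)
        = ((Real.sqrt (2 * Real.pi * (v : ℝ)) : ℝ) : ℂ) := by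
      rw [Real.sqrt_eq_rpow, Complex.ofReal_cpow hsq.le]
      norm_num
    have h3 : (0 : ℂ) - Complex.I ^ 2 / (4 * b) = ((-(v : ℝ) / 2 : ℝ) : ℂ) := by
      rw [Complex.I_sq, hb_def]
      have : ((v : ℝ) : ℂ) ≠ 0 := by
        simp only [ne_eq, Complex.ofReal_eq_zero]
        positivity
      push_cast
      field_simp
      ring
    rw [h1, h2, h3]
    rw [Complex.real_smul, ← mul_assoc, ← Complex.ofReal_mul,
      inv_mul_cancel₀ (Real.sqrt_pos.mpr hsq).ne', Complex.ofReal_one, one_mul,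
      ← Complex.ofReal_exp]

/-- The debiased spherical-to-Cartesian conversion is unbiased: if the range noise `r` has an
arbitrary zero-mean law `ν` and the azimuth noise `u` is Gaussian with mean `0` and variance
`σ²`, independent of `r`, then `(ρ + r)e^{i(φ + u)}` is integrable and its mean equals
`e^{−σ²/2} ρ e^{iφ}`; equivalently, with `λ = e^{−σ²/2}`,
`E[λ⁻¹(ρ+r)cos(φ+u)] = ρ cos φ` and `E[λ⁻¹(ρ+r)sin(φ+u)] = ρ sin φ`. -/
theorem debiased_polar_to_cartesian_unbiased
    (σ : ℝ) (hσ : 0 ≤ σ)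
    (ν : Measure ℝ) [IsProbabilityMeasure ν]
    (hint : Integrable (fun r : ℝ => r) ν) (hmean : (∫ r, r ∂ν) = 0)
    (ρ φ : ℝ) :
    Integrable
      (fun q : ℝ × ℝ => ((ρ + q.1 : ℝ) : ℂ) * Complex.exp (Complex.I * ((φ + q.2 : ℝ) : ℂ)))
      (ν.prod (gaussianReal 0 (Real.toNNReal (σ ^ 2)))) ∧
    (∫ q : ℝ × ℝ, ((ρ + q.1 : ℝ) : ℂ) * Complex.exp (Complex.I * ((φ + q.2 : ℝ) : ℂ))
        ∂(ν.prod (gaussianReal 0 (Real.toNNReal (σ ^ 2)))))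
      = ((Real.exp (-σ ^ 2 / 2) : ℝ) : ℂ) * (ρ : ℂ) * Complex.exp (Complex.I * (φ : ℂ)) ∧
    (∫ q : ℝ × ℝ, (Real.exp (-σ ^ 2 / 2))⁻¹ * (ρ + q.1) * Real.cos (φ + q.2)
        ∂(ν.prod (gaussianReal 0 (Real.toNNReal (σ ^ 2)))))
      = ρ * Real.cos φ ∧
    (∫ q : ℝ × ℝ, (Real.exp (-σ ^ 2 / 2))⁻¹ * (ρ + q.1) * Real.sin (φ + q.2)
        ∂(ν.prod (gaussianReal 0 (Real.toNNReal (σ ^ 2)))))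
      = ρ * Real.sin φ := by
  set v : ℝ≥0 := Real.toNNReal (σ ^ 2) with hv_def
  have hvR : ((v : ℝ)) = σ ^ 2 := Real.coe_toNNReal _ (sq_nonneg σ)
  set μg := gaussianReal 0 v with hμg
  -- integrability of the two factors
  have hf : Integrable (fun r : ℝ => ((ρ + r : ℝ) : ℂ)) ν := by
    have : Integrable (fun r : ℝ => ρ + r) ν := (integrable_const ρ).add hint
    exact this.ofReal
  have hg : Integrable (fun u : ℝ => Complex.exp (Complex.I * ((φ + u : ℝ) : ℂ))) μg :=
    gauss_cexp_I_integrable μg φ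
  have hI : Integrable
      (fun q : ℝ × ℝ => ((ρ + q.1 : ℝ) : ℂ) * Complex.exp (Complex.I * ((φ + q.2 : ℝ) : ℂ)))
      (ν.prod μg) := hf.mul_prod hg
  -- the two 1-dim integrals
  have hfr : (∫ r : ℝ, ((ρ + r : ℝ) : ℂ) ∂ν) = (ρ : ℂ) := by
    have h0 : (∫ r : ℝ, ((ρ + r : ℝ) : ℂ) ∂ν) = (((∫ r : ℝ, ρ + r ∂ν) : ℝ) : ℂ) :=
      integral_ofReal
    rw [h0, integral_add (integrable_const ρ) hint, hmean, integral_const, probReal_univ]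
    norm_num
  have hgu : (∫ u : ℝ, Complex.exp (Complex.I * ((φ + u : ℝ) : ℂ)) ∂μg)
      = Complex.exp (Complex.I * (φ : ℂ)) * ((Real.exp (-σ ^ 2 / 2) : ℝ) : ℂ) := by
    have : ∀ u : ℝ, Complex.exp (Complex.I * ((φ + u : ℝ) : ℂ))
        = Complex.exp (Complex.I * (φ : ℂ)) * Complex.exp (Complex.I * (u : ℂ)) := by
      intro u
      rw [← Complex.exp_add]
      push_cast
      ring_nf
    simp_rw [this]
    rw [integral_const_mul, hμg, gauss_cexp_I_integral v, hvR]
  have hmainInt : (∫ q : ℝ × ℝ, ((ρ + q.1 : ℝ) : ℂ) * Complex.exp (Complex.I * ((φ + q.2 : ℝ) : ℂ))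
      ∂(ν.prod μg))
      = ((Real.exp (-σ ^ 2 / 2) : ℝ) : ℂ) * (ρ : ℂ) * Complex.exp (Complex.I * (φ : ℂ)) := by
    rw [integral_prod_mul (fun r : ℝ => ((ρ + r : ℝ) : ℂ))
      (fun u : ℝ => Complex.exp (Complex.I * ((φ + u : ℝ) : ℂ))), hfr, hgu]
    ring
  refine ⟨hI, hmainInt, ?_, ?_⟩
  · -- cosine part
    have hre : (∫ q : ℝ × ℝ, (ρ + q.1) * Real.cos (φ + q.2) ∂(ν.prod μg))
        = Real.exp (-σ ^ 2 / 2) * (ρ * Real.cos φ) := by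
      have h1 : ∀ q : ℝ × ℝ, (ρ + q.1) * Real.cos (φ + q.2)
          = Complex.re (((ρ + q.1 : ℝ) : ℂ) * Complex.exp (Complex.I * ((φ + q.2 : ℝ) : ℂ))) := by
        intro q
        rw [mul_comm Complex.I, Complex.re_ofReal_mul, Complex.exp_ofReal_mul_I_re]
      simp_rw [h1]
      have h2 : (∫ q : ℝ × ℝ,
          (((ρ + q.1 : ℝ) : ℂ) * Complex.exp (Complex.I * ((φ + q.2 : ℝ) : ℂ))).re ∂(ν.prod μg))
          = (∫ q : ℝ × ℝ,
            ((ρ + q.1 : ℝ) : ℂ) * Complex.exp (Complex.I * ((φ + q.2 : ℝ) : ℂ)) ∂(ν.prod μg)).re :=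
        integral_re hI
      rw [h2, hmainInt, mul_comm Complex.I, ← Complex.ofReal_mul, Complex.re_ofReal_mul,
        Complex.exp_ofReal_mul_I_re]
      ring
    simp_rw [mul_assoc]
    rw [integral_const_mul, hre, ← mul_assoc,
      inv_mul_cancel₀ (Real.exp_ne_zero _), one_mul]
  · -- sine part
    have him : (∫ q : ℝ × ℝ, (ρ + q.1) * Real.sin (φ + q.2) ∂(ν.prod μg))
        = Real.exp (-σ ^ 2 / 2) * (ρ * Real.sin φ) := by
      have h1 : ∀ q : ℝ × ℝ, (ρ + q.1) * Real.sin (φ + q.2)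
          = Complex.im (((ρ + q.1 : ℝ) : ℂ) * Complex.exp (Complex.I * ((φ + q.2 : ℝ) : ℂ))) := by
        intro q
        rw [mul_comm Complex.I, Complex.im_ofReal_mul, Complex.exp_ofReal_mul_I_im]
      simp_rw [h1]
      have h2 : (∫ q : ℝ × ℝ,
          (((ρ + q.1 : ℝ) : ℂ) * Complex.exp (Complex.I * ((φ + q.2 : ℝ) : ℂ))).im ∂(ν.prod μg))
          = (∫ q : ℝ × ℝ,
            ((ρ + q.1 : ℝ) : ℂ) * Complex.exp (Complex.I * ((φ + q.2 : ℝ) : ℂ)) ∂(ν.prod μg)).im :=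
        integral_im hI
      rw [h2, hmainInt, mul_comm Complex.I, ← Complex.ofReal_mul, Complex.im_ofReal_mul,
        Complex.exp_ofReal_mul_I_im]
      ring
    simp_rw [mul_assoc]
    rw [integral_const_mul, him, ← mul_assoc,
      inv_mul_cancel₀ (Real.exp_ne_zero _), one_mul]
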